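/- Deviation of the SVRG estimated gradient from the full gradient at an arbitrary reference point (appendix lemma, corrected constants): Suppose Assumption 2 holds. Then for all x, x̃, y ∈ ℝ^N and every integer A ≥ 1, E_{σ,i}[ ‖(∂Ĝ(σ,x,x̃))^T ∇F_i(Ĝ(σ,x,x̃)) − (∂G(y))^T ∇F_i(G(y))‖² ] ≤ 4(B_F² L_G² + B_G⁴ L_F²)·((1/A)‖x − x̃‖² + ‖x − y‖²). -/

import Mathlib

noncomputable section

open Finset
open scoped RealInnerProductSpace

abbrev Euc (N : ℕ) := EuclideanSpace ℝ (Fin N)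

/-- Frobenius norm of a linear map between Euclidean spaces: the square root of the
sum of the squared norms of the columns. -/
def frobNorm {N M : ℕ} (T : Euc N →L[ℝ] Euc M) : ℝ :=
  Real.sqrt (∑ j : Fin N, ‖T (EuclideanSpace.single j 1)‖ ^ 2)

/-- The averaged inner function `G = (1/m) ∑ⱼ Gⱼ`. -/
def Gbar {m N M : ℕ} (G : Fin m → Euc N → Euc M) (x : Euc N) : Euc M :=
  (m : ℝ)⁻¹ • ∑ j, G j x

/-- The averaged Jacobian `∂G = (1/m) ∑ⱼ ∂Gⱼ`. -/
def Jbar {m N M : ℕ} (J : Fin m → Euc N → (Euc N →L[ℝ] Euc M)) (x : Euc N) :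
    Euc N →L[ℝ] Euc M :=
  (m : ℝ)⁻¹ • ∑ j, J j x

/-- `Tᵀ v`: the transpose (adjoint) of `T` applied to `v`. -/
def transApp {N M : ℕ} (T : Euc N →L[ℝ] Euc M) (v : Euc M) : Euc N :=
  ContinuousLinearMap.adjoint T v

/-- Assumption 2 of the paper: bounded gradients, Lipschitz gradients, bounded
Jacobians (Frobenius norm), Lipschitz inner functions and Lipschitz Jacobians. -/
def Assumption2 {n m N M : ℕ} (G : Fin m → Euc N → Euc M)
    (J : Fin m → Euc N → (Euc N →L[ℝ] Euc M))
    (gradF : Fin n → Euc M → Euc M) (BF LF BG LG : ℝ) : Prop :=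
  (∀ i y, ‖gradF i y‖ ≤ BF) ∧
  (∀ i y y', ‖gradF i y - gradF i y'‖ ≤ LF * ‖y - y'‖) ∧
  (∀ j x, frobNorm (J j x) ≤ BG) ∧
  (∀ j x x', ‖G j x - G j x'‖ ≤ BG * ‖x - x'‖) ∧
  (∀ j x x', frobNorm (J j x - J j x') ≤ LG * ‖x - x'‖)

/-- Continuous differentiability of the data, with the prescribed Jacobians and
gradients. -/
def SmoothData {n m N M : ℕ} (Fi : Fin n → Euc M → ℝ) (G : Fin m → Euc N → Euc M)
    (J : Fin m → Euc N → (Euc N →L[ℝ] Euc M)) (gradF : Fin n → Euc M → Euc M) : Prop :=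
  (∀ j x, HasFDerivAt (G j) (J j x) x) ∧ (∀ j, Continuous (J j)) ∧
  (∀ i y, HasGradientAt (Fi i) (gradF i y) y) ∧ (∀ i, Continuous (gradF i))

/-- Uniform average over all tuples `σ ∈ {1,…,m}^A`. -/
def Esig {m A : ℕ} (f : (Fin A → Fin m) → ℝ) : ℝ :=
  (∑ σ : Fin A → Fin m, f σ) / (m ^ A : ℝ)

/-- The SVRG estimator `Ĝ(σ,x,x̃)` of the inner function. -/
def GhatSVRG {m N M : ℕ} (G : Fin m → Euc N → Euc M) {A : ℕ}
    (σ : Fin A → Fin m) (x xt : Euc N) : Euc M :=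
  (A : ℝ)⁻¹ • ∑ l, (G (σ l) x - G (σ l) xt) + Gbar G xt

/-- The SVRG estimator `∂Ĝ(σ,x,x̃)` of the Jacobian. -/
def JhatSVRG {m N M : ℕ} (J : Fin m → Euc N → (Euc N →L[ℝ] Euc M)) {A : ℕ}
    (σ : Fin A → Fin m) (x xt : Euc N) : Euc N →L[ℝ] Euc M :=
  (A : ℝ)⁻¹ • ∑ l, (J (σ l) x - J (σ l) xt) + Jbar J xt

/-! ### Auxiliary machinery -/

/-- The Hilbert space of "matrices" in which the Frobenius norm is the natural norm. -/
abbrev FrobSpace (N M : ℕ) := PiLp 2 (fun _ : Fin N => Euc M)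

/-- The linear "columns" map realizing the Frobenius norm as a Hilbert norm. -/
def phi (N M : ℕ) : (Euc N →L[ℝ] Euc M) →ₗ[ℝ] FrobSpace N M where
  toFun T := WithLp.toLp 2 (fun j => T (EuclideanSpace.single j 1))
  map_add' T S := by ext j; simp
  map_smul' c T := by ext j; simp

lemma frob_eq {N M : ℕ} (T : Euc N →L[ℝ] Euc M) : frobNorm T = ‖phi N M T‖ := by
  rw [frobNorm, PiLp.norm_eq_of_L2]
  rfl

lemma frob_nonneg {N M : ℕ} (T : Euc N →L[ℝ] Euc M) : 0 ≤ frobNorm T :=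
  Real.sqrt_nonneg _

lemma apply_le_frob {N M : ℕ} (T : Euc N →L[ℝ] Euc M) (u : Euc N) :
    ‖T u‖ ≤ frobNorm T * ‖u‖ := by
  have hu : (∑ j : Fin N, u j • EuclideanSpace.single j (1:ℝ)) = u := by
    have h := (EuclideanSpace.basisFun (Fin N) ℝ).sum_repr u
    simpa [EuclideanSpace.basisFun_apply, EuclideanSpace.basisFun_repr] using h
  have h1 : ‖T u‖ ≤ ∑ j : Fin N, |u j| * ‖T (EuclideanSpace.single j (1:ℝ))‖ := by
    conv_lhs => rw [← hu]
    rw [map_sum]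
    refine (norm_sum_le _ _).trans ?_
    refine Finset.sum_le_sum fun j _ => ?_
    rw [map_smul, norm_smul, Real.norm_eq_abs]
  have h2 : (∑ j : Fin N, |u j| * ‖T (EuclideanSpace.single j (1:ℝ))‖) ≤ ‖u‖ * frobNorm T := by
    have hcs := Finset.sum_mul_sq_le_sq_mul_sq Finset.univ
      (fun j : Fin N => |u j|) (fun j => ‖T (EuclideanSpace.single j (1:ℝ))‖)
    have hpos : 0 ≤ ∑ j : Fin N, |u j| * ‖T (EuclideanSpace.single j (1:ℝ))‖ :=
      Finset.sum_nonneg fun j _ => mul_nonneg (abs_nonneg _) (norm_nonneg _)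
    have hkey := Real.sqrt_le_sqrt hcs
    rw [Real.sqrt_sq hpos, Real.sqrt_mul (Finset.sum_nonneg fun j _ => sq_nonneg _)] at hkey
    have e1 : Real.sqrt (∑ j : Fin N, |u j| ^ 2) = ‖u‖ := by
      rw [EuclideanSpace.norm_eq]
      simp [Real.norm_eq_abs]
    have e2 : Real.sqrt (∑ j : Fin N, ‖T (EuclideanSpace.single j (1:ℝ))‖ ^ 2) = frobNorm T :=
      rfl
    rwa [e1, e2] at hkey
  calc ‖T u‖ ≤ ‖u‖ * frobNorm T := h1.trans h2
    _ = frobNorm T * ‖u‖ := mul_comm _ _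

lemma transApp_le {N M : ℕ} (T : Euc N →L[ℝ] Euc M) (v : Euc M) :
    ‖transApp T v‖ ≤ frobNorm T * ‖v‖ := by
  set u := transApp T v with hu
  have h1 : ‖u‖ ^ 2 = ⟪v, T u⟫ := by
    rw [← real_inner_self_eq_norm_sq]
    exact ContinuousLinearMap.adjoint_inner_left T u v
  have h2 : ⟪v, T u⟫ ≤ ‖v‖ * ‖T u‖ := real_inner_le_norm _ _
  have h3 : ‖T u‖ ≤ frobNorm T * ‖u‖ := apply_le_frob T u
  by_cases hz : ‖u‖ = 0
  · rw [hz]; exact mul_nonneg (frob_nonneg T) (norm_nonneg v)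
  · have hup : 0 < ‖u‖ := lt_of_le_of_ne (norm_nonneg u) (Ne.symm hz)
    nlinarith [norm_nonneg v, frob_nonneg T]

lemma varsum {E : Type*} [NormedAddCommGroup E] [InnerProductSpace ℝ E] {m : ℕ}
    (Z : Fin m → E) (h0 : ∑ j, Z j = 0) :
    ∀ A : ℕ, ∑ σ : Fin A → Fin m, ‖∑ l, Z (σ l)‖ ^ 2
      = (A : ℝ) * (m : ℝ) ^ (A - 1) * ∑ j, ‖Z j‖ ^ 2 := by
  intro A
  induction A with
  | zero => simp
  | succ A ih =>
    have h1 : ∑ σ : Fin (A+1) → Fin m, ‖∑ l, Z (σ l)‖ ^ 2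
        = ∑ p : Fin m × (Fin A → Fin m), ‖Z p.1 + ∑ l : Fin A, Z (p.2 l)‖ ^ 2 := by
      refine (Fintype.sum_equiv (Fin.consEquiv (fun _ : Fin (A+1) => Fin m)) _ _
        (fun p => ?_)).symm
      simp [Fin.consEquiv, Fin.sum_univ_succ]
    rw [h1, Fintype.sum_prod_type]
    have h2 : ∀ a : Fin m, ∀ τ : Fin A → Fin m,
        ‖Z a + ∑ l : Fin A, Z (τ l)‖ ^ 2
          = ‖Z a‖ ^ 2 + 2 * ⟪Z a, ∑ l : Fin A, Z (τ l)⟫ + ‖∑ l : Fin A, Z (τ l)‖ ^ 2 :=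
      fun a τ => norm_add_sq_real _ _
    have h3 : ∀ a : Fin m,
        ∑ τ : Fin A → Fin m, ‖Z a + ∑ l : Fin A, Z (τ l)‖ ^ 2
          = (m : ℝ) ^ A * ‖Z a‖ ^ 2
            + 2 * ⟪Z a, ∑ τ : Fin A → Fin m, ∑ l : Fin A, Z (τ l)⟫
            + ∑ τ : Fin A → Fin m, ‖∑ l : Fin A, Z (τ l)‖ ^ 2 := by
      intro a
      simp_rw [h2 a]
      rw [Finset.sum_add_distrib, Finset.sum_add_distrib, Finset.sum_const,
        ← Finset.mul_sum, ← inner_sum]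
      simp [Fintype.card_fun, mul_comm]
    simp_rw [h3]
    rw [Finset.sum_add_distrib, Finset.sum_add_distrib, Finset.sum_const, ← Finset.mul_sum]
    have h4 : ∑ a : Fin m, 2 * ⟪Z a, ∑ τ : Fin A → Fin m, ∑ l : Fin A, Z (τ l)⟫ = 0 := by
      rw [← Finset.mul_sum, ← sum_inner, h0]
      simp
    rw [h4, ih]
    have hcard : (Finset.univ : Finset (Fin m)).card = m := by simp
    rw [hcard]
    rcases Nat.eq_zero_or_pos A with hA | hA
    · subst hA; simp
    · have : A - 1 + 1 = A := Nat.succ_pred_eq_of_pos hA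
      have hpow : (m : ℝ) * (m : ℝ) ^ (A - 1) = (m : ℝ) ^ A := by
        rw [← pow_succ', this]
      have hS : (m : ℝ) * ((A : ℝ) * (m : ℝ) ^ (A - 1) * ∑ j, ‖Z j‖ ^ 2)
          = (A : ℝ) * (m : ℝ) ^ A * ∑ j, ‖Z j‖ ^ 2 := by
        rw [← hpow]; ring
      have hsub : A + 1 - 1 = A := rfl
      rw [hsub, nsmul_eq_mul]
      push_cast
      linarith [hS]

lemma centered_le {E : Type*} [NormedAddCommGroup E] [InnerProductSpace ℝ E] {m : ℕ}
    (hm : 0 < m) (g : Fin m → E) :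
    ∑ j, ‖g j - (m : ℝ)⁻¹ • ∑ k, g k‖ ^ 2 ≤ ∑ j, ‖g j‖ ^ 2 := by
  set c := (m : ℝ)⁻¹ • ∑ k, g k with hc
  have hmne : (m : ℝ) ≠ 0 := Nat.cast_ne_zero.mpr hm.ne'
  have hsum : ∑ k, g k = (m : ℝ) • c := by
    rw [hc, smul_smul, mul_inv_cancel₀ hmne, one_smul]
  have hexp : ∑ j, ‖g j - c‖ ^ 2
      = ∑ j, ‖g j‖ ^ 2 - 2 * ⟪∑ j, g j, c⟫ + (m : ℝ) * ‖c‖ ^ 2 := by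
    simp_rw [norm_sub_sq_real]
    rw [Finset.sum_add_distrib, Finset.sum_sub_distrib, Finset.sum_const, ← Finset.mul_sum,
      ← sum_inner]
    simp [nsmul_eq_mul]
  have hinner : ⟪∑ j, g j, c⟫ = (m : ℝ) * ‖c‖ ^ 2 := by
    rw [hsum, real_inner_smul_left, real_inner_self_eq_norm_sq]
  rw [hexp, hinner]
  have hnn : 0 ≤ (m : ℝ) * ‖c‖ ^ 2 := by positivity
  linarith

lemma svrg_moment {E : Type*} [NormedAddCommGroup E] [InnerProductSpace ℝ E] {m A : ℕ}
    (hm : 0 < m) (hA : 0 < A) (g : Fin m → E) (C : ℝ) (hg : ∀ j, ‖g j‖ ≤ C) :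
    (∑ σ : Fin A → Fin m, ‖(A : ℝ)⁻¹ • ∑ l, g (σ l) - (m : ℝ)⁻¹ • ∑ j, g j‖ ^ 2)
      / ((m : ℝ) ^ A) ≤ C ^ 2 / A := by
  have hmne : (m : ℝ) ≠ 0 := Nat.cast_ne_zero.mpr hm.ne'
  have hAne : (A : ℝ) ≠ 0 := Nat.cast_ne_zero.mpr hA.ne'
  have hC : 0 ≤ C := le_trans (norm_nonneg _) (hg ⟨0, hm⟩)
  set c := (m : ℝ)⁻¹ • ∑ j, g j with hc
  set Z := fun j => g j - c with hZ
  have hZ0 : ∑ j, Z j = 0 := by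
    simp only [hZ, Finset.sum_sub_distrib, Finset.sum_const, Finset.card_univ,
      Fintype.card_fin, hc]
    rw [← Nat.cast_smul_eq_nsmul ℝ, smul_smul, mul_inv_cancel₀ hmne, one_smul, sub_self]
  have hrw : ∀ σ : Fin A → Fin m,
      (A : ℝ)⁻¹ • ∑ l, g (σ l) - c = (A : ℝ)⁻¹ • ∑ l, Z (σ l) := by
    intro σ
    simp only [hZ, Finset.sum_sub_distrib, Finset.sum_const, Finset.card_univ,
      Fintype.card_fin, smul_sub]
    rw [← Nat.cast_smul_eq_nsmul ℝ, smul_smul, inv_mul_cancel₀ hAne, one_smul]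
  have hmain : ∑ σ : Fin A → Fin m, ‖(A : ℝ)⁻¹ • ∑ l, g (σ l) - c‖ ^ 2
      = ((A : ℝ)⁻¹) ^ 2 * ((A : ℝ) * (m : ℝ) ^ (A - 1) * ∑ j, ‖Z j‖ ^ 2) := by
    rw [← varsum Z hZ0 A, Finset.mul_sum]
    refine Finset.sum_congr rfl fun σ _ => ?_
    rw [hrw σ, norm_smul, mul_pow, Real.norm_eq_abs, sq_abs]
  have hZle : ∑ j, ‖Z j‖ ^ 2 ≤ (m : ℝ) * C ^ 2 := by
    refine (centered_le hm g).trans ?_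
    calc ∑ j, ‖g j‖ ^ 2 ≤ ∑ _j : Fin m, C ^ 2 :=
          Finset.sum_le_sum fun j _ => pow_le_pow_left₀ (norm_nonneg _) (hg j) 2
      _ = (m : ℝ) * C ^ 2 := by simp [mul_comm]
  rw [hmain]
  have hple : ((A : ℝ)⁻¹) ^ 2 * ((A : ℝ) * (m : ℝ) ^ (A - 1) * ∑ j, ‖Z j‖ ^ 2)
      ≤ ((A : ℝ)⁻¹) ^ 2 * ((A : ℝ) * (m : ℝ) ^ (A - 1) * ((m : ℝ) * C ^ 2)) := by
    have h1 : (0 : ℝ) ≤ ((A : ℝ)⁻¹) ^ 2 := sq_nonneg _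
    have h2 : (0 : ℝ) ≤ (A : ℝ) * (m : ℝ) ^ (A - 1) := by positivity
    exact mul_le_mul_of_nonneg_left (mul_le_mul_of_nonneg_left hZle h2) h1
  have hpow : (m : ℝ) ^ (A - 1) * (m : ℝ) = (m : ℝ) ^ A := by
    rw [← pow_succ, Nat.sub_add_cancel hA]
  have hfin : ((A : ℝ)⁻¹) ^ 2 * ((A : ℝ) * (m : ℝ) ^ (A - 1) * ((m : ℝ) * C ^ 2))
      / ((m : ℝ) ^ A) = C ^ 2 / A := by
    field_simp
    rw [← hpow]
    ring
  calc ((A : ℝ)⁻¹) ^ 2 * ((A : ℝ) * (m : ℝ) ^ (A - 1) * ∑ j, ‖Z j‖ ^ 2) / ((m : ℝ) ^ A)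
      ≤ ((A : ℝ)⁻¹) ^ 2 * ((A : ℝ) * (m : ℝ) ^ (A - 1) * ((m : ℝ) * C ^ 2)) / ((m : ℝ) ^ A) := by
        have hden : (0 : ℝ) ≤ (m : ℝ) ^ A := by positivity
        exact div_le_div_of_nonneg_right hple hden
    _ = C ^ 2 / A := hfin

lemma avg_norm_le {E : Type*} [NormedAddCommGroup E] [NormedSpace ℝ E] {m : ℕ} (hm : 0 < m)
    (v : Fin m → E) (C : ℝ) (h : ∀ j, ‖v j‖ ≤ C) : ‖(m : ℝ)⁻¹ • ∑ j, v j‖ ≤ C := by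
  have hmne : (m : ℝ) ≠ 0 := Nat.cast_ne_zero.mpr hm.ne'
  rw [norm_smul, Real.norm_eq_abs, abs_inv, Nat.abs_cast]
  have h1 : ‖∑ j, v j‖ ≤ (m : ℝ) * C := by
    refine (norm_sum_le _ _).trans ?_
    calc ∑ j, ‖v j‖ ≤ ∑ _j : Fin m, C := Finset.sum_le_sum fun j _ => h j
      _ = (m : ℝ) * C := by simp [mul_comm]
  calc (m : ℝ)⁻¹ * ‖∑ j, v j‖ ≤ (m : ℝ)⁻¹ * ((m : ℝ) * C) :=
        mul_le_mul_of_nonneg_left h1 (by positivity)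
    _ = C := by field_simp

lemma frob_avg_le {N M m : ℕ} (hm : 0 < m) (T : Fin m → (Euc N →L[ℝ] Euc M)) (C : ℝ)
    (h : ∀ j, frobNorm (T j) ≤ C) : frobNorm ((m : ℝ)⁻¹ • ∑ j, T j) ≤ C := by
  rw [frob_eq, map_smul, map_sum]
  exact avg_norm_le hm (fun j => phi N M (T j)) C (fun j => by rw [← frob_eq]; exact h j)

lemma real_combine (BF LF BG LG : ℝ) (hBF : 0 < BF) (hLF : 0 < LF) (hBG : 0 < BG)
    (hLG : 0 < LG) (aa bb ff gg qq rr xy dd : ℝ)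
    (haa : 0 ≤ aa) (hbb : 0 ≤ bb) (hff : 0 ≤ ff) (hgg : 0 ≤ gg) (hqq : 0 ≤ qq)
    (hrr : 0 ≤ rr) (hxy : 0 ≤ xy) (hdd : 0 ≤ dd)
    (ha : aa ≤ ff * BF) (hb : bb ≤ BG * (LF * gg))
    (hq : ff ≤ qq + LG * xy) (hr : gg ≤ rr + BG * xy)
    (hd : dd ≤ aa + bb) :
    dd ^ 2 ≤ 4 * BF ^ 2 * qq ^ 2 + 4 * BG ^ 2 * LF ^ 2 * rr ^ 2
      + (4 * BF ^ 2 * LG ^ 2 + 4 * BG ^ 4 * LF ^ 2) * xy ^ 2 := by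
  have f2 : ff ^ 2 ≤ 2 * qq ^ 2 + 2 * LG ^ 2 * xy ^ 2 := by
    nlinarith [sq_nonneg (qq - LG * xy), mul_nonneg hLG.le hxy]
  have g2 : gg ^ 2 ≤ 2 * rr ^ 2 + 2 * BG ^ 2 * xy ^ 2 := by
    nlinarith [sq_nonneg (rr - BG * xy), mul_nonneg hBG.le hxy]
  have a2 : aa ^ 2 ≤ BF ^ 2 * ff ^ 2 := by nlinarith [mul_nonneg hff hBF.le]
  have b2 : bb ^ 2 ≤ BG ^ 2 * LF ^ 2 * gg ^ 2 := by
    nlinarith [mul_nonneg (mul_nonneg hBG.le hLF.le) hgg]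
  have d2 : dd ^ 2 ≤ 2 * aa ^ 2 + 2 * bb ^ 2 := by nlinarith [sq_nonneg (aa - bb)]
  have m1 : BF ^ 2 * ff ^ 2 ≤ BF ^ 2 * (2 * qq ^ 2 + 2 * LG ^ 2 * xy ^ 2) :=
    mul_le_mul_of_nonneg_left f2 (sq_nonneg BF)
  have m2 : BG ^ 2 * LF ^ 2 * gg ^ 2 ≤ BG ^ 2 * LF ^ 2 * (2 * rr ^ 2 + 2 * BG ^ 2 * xy ^ 2) :=
    mul_le_mul_of_nonneg_left g2 (by positivity)
  linarith [d2, a2, b2, m1, m2]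

set_option maxHeartbeats 2000000 in
/-- Deviation of the SVRG estimated gradient from the full gradient at an arbitrary
reference point (corrected constants). -/
theorem svrg_gradient_deviation_reference_bound
    {n m N M A : ℕ} (hn : 0 < n) (hm : 0 < m) (hA : 0 < A)
    (BF LF BG LG : ℝ) (hBF : 0 < BF) (hLF : 0 < LF) (hBG : 0 < BG) (hLG : 0 < LG)
    (Fi : Fin n → Euc M → ℝ) (G : Fin m → Euc N → Euc M)
    (J : Fin m → Euc N → (Euc N →L[ℝ] Euc M)) (gradF : Fin n → Euc M → Euc M)
    (hsm : SmoothData Fi G J gradF)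
    (hA2 : Assumption2 G J gradF BF LF BG LG)
    (x xt y : Euc N) :
    (n : ℝ)⁻¹ * ∑ i, Esig (fun σ : Fin A → Fin m =>
        ‖transApp (JhatSVRG J σ x xt) (gradF i (GhatSVRG G σ x xt)) -
          transApp (Jbar J y) (gradF i (Gbar G y))‖ ^ 2)
      ≤ 4 * (BF ^ 2 * LG ^ 2 + BG ^ 4 * LF ^ 2) *
          ((1 / (A : ℝ)) * ‖x - xt‖ ^ 2 + ‖x - y‖ ^ 2) := by
  obtain ⟨hBFb, hLFb, hBGb, hGlip, hJlip⟩ := hA2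
  have hmne : (m : ℝ) ≠ 0 := Nat.cast_ne_zero.mpr hm.ne'
  have hAne : (A : ℝ) ≠ 0 := Nat.cast_ne_zero.mpr hA.ne'
  have hnne : (n : ℝ) ≠ 0 := Nat.cast_ne_zero.mpr hn.ne'
  set K : ℝ := 4 * (BF ^ 2 * LG ^ 2 + BG ^ 4 * LF ^ 2) *
      ((1 / (A : ℝ)) * ‖x - xt‖ ^ 2 + ‖x - y‖ ^ 2) with hK
  set gJ : Fin m → FrobSpace N M := fun j => phi N M (J j x) - phi N M (J j xt) with hgJ
  set gG : Fin m → Euc M := fun j => G j x - G j xt with hgG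
  have hgJb : ∀ j, ‖gJ j‖ ≤ LG * ‖x - xt‖ := by
    intro j
    simp only [hgJ]
    rw [← map_sub, ← frob_eq]
    exact hJlip j x xt
  have hgGb : ∀ j, ‖gG j‖ ≤ BG * ‖x - xt‖ := fun j => hGlip j x xt
  have hmomJ := svrg_moment hm hA gJ (LG * ‖x - xt‖) hgJb
  have hmomG := svrg_moment hm hA gG (BG * ‖x - xt‖) hgGb
  have hJrw : ∀ σ : Fin A → Fin m, phi N M (JhatSVRG J σ x xt - Jbar J x)
      = (A : ℝ)⁻¹ • ∑ l, gJ (σ l) - (m : ℝ)⁻¹ • ∑ j, gJ j := by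
    intro σ
    simp only [JhatSVRG, Jbar, map_sub, map_add, map_smul, map_sum, hgJ,
      smul_sub, Finset.sum_sub_distrib]
    abel
  have hGrw : ∀ σ : Fin A → Fin m, GhatSVRG G σ x xt - Gbar G x
      = (A : ℝ)⁻¹ • ∑ l, gG (σ l) - (m : ℝ)⁻¹ • ∑ j, gG j := by
    intro σ
    simp only [GhatSVRG, Gbar, hgG, smul_sub, Finset.sum_sub_distrib]
    abel
  have hJybd : frobNorm (Jbar J y) ≤ BG := by
    rw [Jbar]; exact frob_avg_le hm _ BG (fun j => hBGb j y)
  have hJxy : frobNorm (Jbar J x - Jbar J y) ≤ LG * ‖x - y‖ := by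
    have hrw2 : Jbar J x - Jbar J y = (m : ℝ)⁻¹ • ∑ j, (J j x - J j y) := by
      rw [Jbar, Jbar, Finset.sum_sub_distrib, smul_sub]
    rw [hrw2]
    exact frob_avg_le hm _ _ (fun j => hJlip j x y)
  have hGxy : ‖Gbar G x - Gbar G y‖ ≤ BG * ‖x - y‖ := by
    have hrw2 : Gbar G x - Gbar G y = (m : ℝ)⁻¹ • ∑ j, (G j x - G j y) := by
      rw [Gbar, Gbar, Finset.sum_sub_distrib, smul_sub]
    rw [hrw2]
    exact avg_norm_le hm _ _ (fun j => hGlip j x y)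
  -- pointwise bound
  have hpt : ∀ (i : Fin n) (σ : Fin A → Fin m),
      ‖transApp (JhatSVRG J σ x xt) (gradF i (GhatSVRG G σ x xt)) -
        transApp (Jbar J y) (gradF i (Gbar G y))‖ ^ 2
      ≤ 4 * BF ^ 2 * ‖(A : ℝ)⁻¹ • ∑ l, gJ (σ l) - (m : ℝ)⁻¹ • ∑ j, gJ j‖ ^ 2
        + 4 * BG ^ 2 * LF ^ 2 * ‖(A : ℝ)⁻¹ • ∑ l, gG (σ l) - (m : ℝ)⁻¹ • ∑ j, gG j‖ ^ 2
        + (4 * BF ^ 2 * LG ^ 2 + 4 * BG ^ 4 * LF ^ 2) * ‖x - y‖ ^ 2 := by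
    intro i σ
    have hd : transApp (JhatSVRG J σ x xt) (gradF i (GhatSVRG G σ x xt)) -
        transApp (Jbar J y) (gradF i (Gbar G y))
        = transApp (JhatSVRG J σ x xt - Jbar J y) (gradF i (GhatSVRG G σ x xt))
          + transApp (Jbar J y)
              (gradF i (GhatSVRG G σ x xt) - gradF i (Gbar G y)) := by
      simp only [transApp, map_sub, ContinuousLinearMap.sub_apply]
      abel
    have ha : ‖transApp (JhatSVRG J σ x xt - Jbar J y) (gradF i (GhatSVRG G σ x xt))‖
        ≤ frobNorm (JhatSVRG J σ x xt - Jbar J y) * BF :=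
      (transApp_le _ _).trans
        (mul_le_mul_of_nonneg_left (hBFb i (GhatSVRG G σ x xt)) (frob_nonneg _))
    have hb : ‖transApp (Jbar J y) (gradF i (GhatSVRG G σ x xt) - gradF i (Gbar G y))‖
        ≤ BG * (LF * ‖GhatSVRG G σ x xt - Gbar G y‖) :=
      (transApp_le _ _).trans
        (mul_le_mul hJybd (hLFb i (GhatSVRG G σ x xt) (Gbar G y)) (norm_nonneg _) hBG.le)
    have hq : frobNorm (JhatSVRG J σ x xt - Jbar J y)
        ≤ ‖(A : ℝ)⁻¹ • ∑ l, gJ (σ l) - (m : ℝ)⁻¹ • ∑ j, gJ j‖ + LG * ‖x - y‖ := by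
      have h1 : frobNorm (JhatSVRG J σ x xt - Jbar J y)
          ≤ frobNorm (JhatSVRG J σ x xt - Jbar J x) + frobNorm (Jbar J x - Jbar J y) := by
        rw [frob_eq, frob_eq (JhatSVRG J σ x xt - Jbar J x), frob_eq (Jbar J x - Jbar J y),
          map_sub, map_sub, map_sub]
        exact norm_sub_le_norm_sub_add_norm_sub _ _ _
      have h2 : frobNorm (JhatSVRG J σ x xt - Jbar J x)
          = ‖(A : ℝ)⁻¹ • ∑ l, gJ (σ l) - (m : ℝ)⁻¹ • ∑ j, gJ j‖ := by
        rw [frob_eq, hJrw σ]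
      linarith [hJxy]
    have hr : ‖GhatSVRG G σ x xt - Gbar G y‖
        ≤ ‖(A : ℝ)⁻¹ • ∑ l, gG (σ l) - (m : ℝ)⁻¹ • ∑ j, gG j‖ + BG * ‖x - y‖ := by
      have h1 : ‖GhatSVRG G σ x xt - Gbar G y‖
          ≤ ‖GhatSVRG G σ x xt - Gbar G x‖ + ‖Gbar G x - Gbar G y‖ :=
        norm_sub_le_norm_sub_add_norm_sub _ _ _
      have h2 : ‖GhatSVRG G σ x xt - Gbar G x‖
          = ‖(A : ℝ)⁻¹ • ∑ l, gG (σ l) - (m : ℝ)⁻¹ • ∑ j, gG j‖ := by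
        rw [hGrw σ]
      linarith [hGxy]
    rw [hd]
    exact real_combine BF LF BG LG hBF hLF hBG hLG _ _
      (frobNorm (JhatSVRG J σ x xt - Jbar J y)) (‖GhatSVRG G σ x xt - Gbar G y‖)
      (‖(A : ℝ)⁻¹ • ∑ l, gJ (σ l) - (m : ℝ)⁻¹ • ∑ j, gJ j‖)
      (‖(A : ℝ)⁻¹ • ∑ l, gG (σ l) - (m : ℝ)⁻¹ • ∑ j, gG j‖) (‖x - y‖) _
      (norm_nonneg _) (norm_nonneg _) (frob_nonneg _) (norm_nonneg _) (norm_nonneg _)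
      (norm_nonneg _) (norm_nonneg _) (norm_nonneg _) ha hb hq hr (norm_add_le _ _)
  -- averaging
  have hEsig : ∀ i : Fin n, Esig (fun σ : Fin A → Fin m =>
      ‖transApp (JhatSVRG J σ x xt) (gradF i (GhatSVRG G σ x xt)) -
        transApp (Jbar J y) (gradF i (Gbar G y))‖ ^ 2) ≤ K := by
    intro i
    rw [Esig]
    set SJ := ∑ σ : Fin A → Fin m, ‖(A : ℝ)⁻¹ • ∑ l, gJ (σ l) - (m : ℝ)⁻¹ • ∑ j, gJ j‖ ^ 2
      with hSJ
    set SG := ∑ σ : Fin A → Fin m, ‖(A : ℝ)⁻¹ • ∑ l, gG (σ l) - (m : ℝ)⁻¹ • ∑ j, gG j‖ ^ 2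
      with hSG
    have hden : (0 : ℝ) < (m : ℝ) ^ A := by positivity
    have hstep : (∑ σ : Fin A → Fin m,
        ‖transApp (JhatSVRG J σ x xt) (gradF i (GhatSVRG G σ x xt)) -
          transApp (Jbar J y) (gradF i (Gbar G y))‖ ^ 2) / ((m : ℝ) ^ A)
        ≤ (4 * BF ^ 2 * SJ + 4 * BG ^ 2 * LF ^ 2 * SG
            + ((m : ℝ) ^ A) * ((4 * BF ^ 2 * LG ^ 2 + 4 * BG ^ 4 * LF ^ 2) * ‖x - y‖ ^ 2))
          / ((m : ℝ) ^ A) := by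
      apply div_le_div_of_nonneg_right _ hden.le
      have hsum := Finset.sum_le_sum (s := (Finset.univ : Finset (Fin A → Fin m))) (fun σ _ => hpt i σ)
      refine hsum.trans (le_of_eq ?_)
      rw [Finset.sum_add_distrib, Finset.sum_add_distrib, ← Finset.mul_sum, ← Finset.mul_sum,
        Finset.sum_const, Finset.card_univ, Fintype.card_fun, Fintype.card_fin,
        Fintype.card_fin, nsmul_eq_mul, hSJ, hSG]
      push_cast
      ring
    refine hstep.trans ?_
    have hsplit : (4 * BF ^ 2 * SJ + 4 * BG ^ 2 * LF ^ 2 * SG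
        + ((m : ℝ) ^ A) * ((4 * BF ^ 2 * LG ^ 2 + 4 * BG ^ 4 * LF ^ 2) * ‖x - y‖ ^ 2))
          / ((m : ℝ) ^ A)
        = 4 * BF ^ 2 * (SJ / ((m : ℝ) ^ A)) + 4 * BG ^ 2 * LF ^ 2 * (SG / ((m : ℝ) ^ A))
          + (4 * BF ^ 2 * LG ^ 2 + 4 * BG ^ 4 * LF ^ 2) * ‖x - y‖ ^ 2 := by
      field_simp
    rw [hsplit]
    have t1 : 4 * BF ^ 2 * (SJ / ((m : ℝ) ^ A))
        ≤ 4 * BF ^ 2 * ((LG * ‖x - xt‖) ^ 2 / A) :=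
      mul_le_mul_of_nonneg_left hmomJ (by positivity)
    have t2 : 4 * BG ^ 2 * LF ^ 2 * (SG / ((m : ℝ) ^ A))
        ≤ 4 * BG ^ 2 * LF ^ 2 * ((BG * ‖x - xt‖) ^ 2 / A) :=
      mul_le_mul_of_nonneg_left hmomG (by positivity)
    have hKeq : 4 * BF ^ 2 * ((LG * ‖x - xt‖) ^ 2 / A)
        + 4 * BG ^ 2 * LF ^ 2 * ((BG * ‖x - xt‖) ^ 2 / A)
        + (4 * BF ^ 2 * LG ^ 2 + 4 * BG ^ 4 * LF ^ 2) * ‖x - y‖ ^ 2 = K := by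
      rw [hK]
      field_simp
    linarith [t1, t2]
  calc (n : ℝ)⁻¹ * ∑ i, Esig (fun σ : Fin A → Fin m =>
        ‖transApp (JhatSVRG J σ x xt) (gradF i (GhatSVRG G σ x xt)) -
          transApp (Jbar J y) (gradF i (Gbar G y))‖ ^ 2)
      ≤ (n : ℝ)⁻¹ * ∑ _i : Fin n, K := by
        refine mul_le_mul_of_nonneg_left (Finset.sum_le_sum fun i _ => hEsig i) (by positivity)
    _ = K := by
        rw [Finset.sum_const, Finset.card_univ, Fintype.card_fin, nsmul_eq_mul,
          ← mul_assoc, inv_mul_cancel₀ hnne, one_mul]
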